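/- Let K ⊆ ℝ^(n+m) be closed and partially convex in x, with every slice K_y compact and convex, and suppose the set-valued map y ↦ K_y is both upper and lower hemicontinuous on π_Y(K). If z = (x_z, y_z) ∉ K, then there exists a continuous function f : ℝ^(n+m) → ℝ, affine in x for every fixed y, such that f ≥ 0 on K and f(x_z, y_z) < 0. -/

import Mathlib

open Filter Topology

def pdot {n : ℕ} (a b : Fin n → ℝ) : ℝ := ∑ i, a i * b i

lemma pdot_nonneg {n : ℕ} (a : Fin n → ℝ) : 0 ≤ pdot a a :=
  Finset.sum_nonneg fun i _ => mul_self_nonneg _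

lemma pdot_self_eq_zero {n : ℕ} {a : Fin n → ℝ} (h : pdot a a = 0) : a = 0 := by
  funext i
  have := (Finset.sum_eq_zero_iff_of_nonneg (fun i _ => mul_self_nonneg (a i))).mp h i
    (Finset.mem_univ i)
  simpa [mul_self_eq_zero] using this

lemma sq_le_pdot {n : ℕ} (a : Fin n → ℝ) (i : Fin n) : a i * a i ≤ pdot a a :=
  Finset.single_le_sum (f := fun j => a j * a j) (fun j _ => mul_self_nonneg _)
    (Finset.mem_univ i)

lemma pdot_smul_left {n : ℕ} (c : ℝ) (a b : Fin n → ℝ) :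
    pdot (c • a) b = c * pdot a b := by
  simp [pdot, Finset.mul_sum]; exact Finset.sum_congr rfl fun i _ => by ring

lemma pdot_add_right {n : ℕ} (a b c : Fin n → ℝ) :
    pdot a (b + c) = pdot a b + pdot a c := by
  simp [pdot, ← Finset.sum_add_distrib]; exact Finset.sum_congr rfl fun i _ => by ring

lemma pdot_parallelogram {n : ℕ} (a b : Fin n → ℝ) :
    pdot ((1/2 : ℝ) • a + (1/2 : ℝ) • b) ((1/2 : ℝ) • a + (1/2 : ℝ) • b)
      = (pdot a a + pdot b b) / 2 - pdot (a - b) (a - b) / 4 := by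
  simp only [pdot, Finset.sum_div, ← Finset.sum_sub_distrib, ← Finset.sum_add_distrib]
  exact Finset.sum_congr rfl fun i _ => by
    simp [Pi.add_apply, Pi.smul_apply, Pi.sub_apply, smul_eq_mul]; ring

lemma pdot_expand {n : ℕ} (a b : Fin n → ℝ) (t : ℝ) :
    pdot (a + t • b) (a + t • b) = pdot a a + 2 * t * pdot a b + t ^ 2 * pdot b b := by
  simp only [pdot, Finset.mul_sum, ← Finset.sum_add_distrib]
  exact Finset.sum_congr rfl fun i _ => by
    simp [Pi.add_apply, Pi.smul_apply, smul_eq_mul]; ring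

lemma pdot_affine {n : ℕ} (w x₁ x₂ c : Fin n → ℝ) (t : ℝ) :
    pdot w (t • x₁ + (1 - t) • x₂ - c)
      = t * pdot w (x₁ - c) + (1 - t) * pdot w (x₂ - c) := by
  simp only [pdot, Finset.mul_sum, ← Finset.sum_add_distrib]
  exact Finset.sum_congr rfl fun i _ => by
    simp [Pi.add_apply, Pi.smul_apply, Pi.sub_apply, smul_eq_mul]; ring

lemma pdot_continuous {n : ℕ} :
    Continuous fun p : (Fin n → ℝ) × (Fin n → ℝ) => pdot p.1 p.2 :=
  continuous_finset_sum _ fun i _ =>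
    ((continuous_apply i).comp continuous_fst).mul ((continuous_apply i).comp continuous_snd)

lemma obtuse_aux {D E : ℝ} (hE : 0 ≤ E)
    (h : ∀ t : ℝ, 0 < t → t ≤ 1 → 0 ≤ 2 * t * D + t ^ 2 * E) : 0 ≤ D := by
  by_contra hD
  push_neg at hD
  rcases eq_or_lt_of_le hE with hE0 | hE0
  · have := h 1 one_pos le_rfl
    nlinarith
  · set t := min 1 (-D / E) with ht
    have htpos : 0 < t := lt_min one_pos (div_pos (by linarith) hE0)
    have ht1 : t ≤ 1 := min_le_left _ _
    have htE : t * E ≤ -D := by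
      have : t ≤ -D / E := min_le_right _ _
      calc t * E ≤ (-D / E) * E := by nlinarith
        _ = -D := by field_simp
    have := h t htpos ht1
    nlinarith

/-- Hahn–Banach-type separation for closed partially convex sets with compact
slices and a continuous (upper and lower hemicontinuous) slice map: a point
outside `K` is separated by a continuous function affine in `x` for each `y`. -/
theorem stmt_10 (n m : ℕ) (K : Set ((Fin n → ℝ) × (Fin m → ℝ)))
    (hKcl : IsClosed K)
    (hconv : ∀ y : Fin m → ℝ, Convex ℝ {x : Fin n → ℝ | (x, y) ∈ K})
    (hcomp : ∀ y : Fin m → ℝ, IsCompact {x : Fin n → ℝ | (x, y) ∈ K})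
    (Y : Set (Fin m → ℝ)) (hY : Y = Prod.snd '' K)
    (huhc : ∀ y ∈ Y, ∀ yk : ℕ → (Fin m → ℝ), (∀ k, yk k ∈ Y) →
      Filter.Tendsto yk Filter.atTop (nhds y) →
      ∀ xk : ℕ → (Fin n → ℝ), (∀ k, (xk k, yk k) ∈ K) →
        ∃ φ : ℕ → ℕ, StrictMono φ ∧ ∃ x : Fin n → ℝ, (x, y) ∈ K ∧
          Filter.Tendsto (xk ∘ φ) Filter.atTop (nhds x))
    (hlhc : ∀ y ∈ Y, ∀ yk : ℕ → (Fin m → ℝ), (∀ k, yk k ∈ Y) →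
      Filter.Tendsto yk Filter.atTop (nhds y) →
      ∀ x : Fin n → ℝ, (x, y) ∈ K →
        ∃ xk : ℕ → (Fin n → ℝ), (∀ k, (xk k, yk k) ∈ K) ∧
          Filter.Tendsto xk Filter.atTop (nhds x))
    (z : (Fin n → ℝ) × (Fin m → ℝ)) (hz : z ∉ K) :
    ∃ f : (Fin n → ℝ) × (Fin m → ℝ) → ℝ, Continuous f ∧
      (∀ (y : Fin m → ℝ) (x₁ x₂ : Fin n → ℝ), ∀ t ∈ Set.Icc (0:ℝ) 1,
        f (t • x₁ + (1 - t) • x₂, y) = t * f (x₁, y) + (1 - t) * f (x₂, y)) ∧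
      (∀ w ∈ K, 0 ≤ f w) ∧ f z < 0 := by
  classical
  -- a ball around z missing K
  obtain ⟨ε, hε, hball⟩ : ∃ ε > 0, Metric.ball z ε ⊆ Kᶜ :=
    Metric.isOpen_iff.mp hKcl.isOpen_compl z hz
  have hsep : ∀ p ∈ K, dist p.2 z.2 < ε → ε ≤ dist p.1 z.1 := by
    intro p hp hd
    by_contra hlt
    push_neg at hlt
    have : p ∈ Metric.ball z ε := by
      rw [Metric.mem_ball, Prod.dist_eq]
      exact max_lt hlt hd
    exact hball this hp
  have hQsep : ∀ p ∈ K, dist p.2 z.2 < ε →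
      ε ^ 2 ≤ pdot (p.1 - z.1) (p.1 - z.1) := by
    intro p hp hd
    have h1 := hsep p hp hd
    have h2 : ∃ i, ε ≤ dist (p.1 i) (z.1 i) := by
      by_contra hcon
      push_neg at hcon
      exact absurd ((dist_pi_lt_iff hε).mpr hcon) (not_lt.mpr h1)
    obtain ⟨i, hi⟩ := h2
    rw [Real.dist_eq] at hi
    have h3 : (p.1 - z.1) i * (p.1 - z.1) i ≤ pdot (p.1 - z.1) (p.1 - z.1) :=
      sq_le_pdot _ i
    have h4 : ε * ε ≤ |p.1 i - z.1 i| * |p.1 i - z.1 i| :=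
      mul_self_le_mul_self hε.le hi
    rw [abs_mul_abs_self] at h4
    simp only [Pi.sub_apply] at h3
    nlinarith
  -- basic slice facts
  have hSlice : ∀ y ∈ Y, ∃ x, (x, y) ∈ K := by
    intro y hy
    rw [hY] at hy
    obtain ⟨w, hw, hwy⟩ := hy
    exact ⟨w.1, by rw [← hwy]; simpa using hw⟩
  set B : Set (Fin m → ℝ) := {y | y ∈ Y ∧ dist y z.2 ≤ ε / 2} with hBdef
  set A : Set (Fin m → ℝ) := closure B with hAdef
  have hAcl : IsClosed A := isClosed_closure
  have hAdist : ∀ y ∈ A, dist y z.2 ≤ ε / 2 := by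
    intro y hy
    have hsub : B ⊆ Metric.closedBall z.2 (ε / 2) := fun b hb => Metric.mem_closedBall.mpr hb.2
    have := closure_minimal hsub Metric.isClosed_closedBall hy
    exact Metric.mem_closedBall.mp this
  -- continuity of the quadratic
  have hQc : Continuous fun x : Fin n → ℝ => pdot (x - z.1) (x - z.1) := by
    have h1 : Continuous fun x : Fin n → ℝ => x - z.1 := continuous_id.sub continuous_const
    exact pdot_continuous.comp (h1.prodMk h1)
  -- the projection P
  have hPex : ∀ y, ∃ p, y ∈ B → ((p, y) ∈ K ∧ ∀ x, (x, y) ∈ K →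
      pdot (p - z.1) (p - z.1) ≤ pdot (x - z.1) (x - z.1)) := by
    intro y
    by_cases hy : y ∈ B
    · obtain ⟨x0, hx0⟩ := hSlice y hy.1
      obtain ⟨p, hpS, hpm⟩ := (hcomp y).exists_isMinOn ⟨x0, hx0⟩ hQc.continuousOn
      exact ⟨p, fun _ => ⟨hpS, fun x hx => hpm hx⟩⟩
    · exact ⟨0, fun h => absurd h hy⟩
  choose P hP using hPex
  have hPK : ∀ y ∈ B, (P y, y) ∈ K := fun y hy => (hP y hy).1
  have hPmin : ∀ y ∈ B, ∀ x, (x, y) ∈ K →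
      pdot (P y - z.1) (P y - z.1) ≤ pdot (x - z.1) (x - z.1) :=
    fun y hy => (hP y hy).2
  have hQP : ∀ y ∈ B, ε ^ 2 ≤ pdot (P y - z.1) (P y - z.1) := by
    intro y hy
    exact hQsep (P y, y) (hPK y hy) (by simpa using lt_of_le_of_lt hy.2 (by linarith))
  have hQPpos : ∀ y ∈ B, 0 < pdot (P y - z.1) (P y - z.1) :=
    fun y hy => lt_of_lt_of_le (by positivity) (hQP y hy)
  -- uniqueness of the projection
  have hPuniq : ∀ y ∈ B, ∀ q, (q, y) ∈ K →
      pdot (q - z.1) (q - z.1) ≤ pdot (P y - z.1) (P y - z.1) → q = P y := by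
    intro y hy q hqK hle
    have hmid : ((1/2 : ℝ) • q + (1/2 : ℝ) • P y, y) ∈ K :=
      hconv y hqK (hPK y hy) (by norm_num) (by norm_num) (by norm_num)
    have hmin := hPmin y hy _ hmid
    have hpar : (1/2 : ℝ) • q + (1/2 : ℝ) • P y - z.1
        = (1/2 : ℝ) • (q - z.1) + (1/2 : ℝ) • (P y - z.1) := by
      funext i; simp [Pi.add_apply, Pi.smul_apply, Pi.sub_apply, smul_eq_mul]; ring
    rw [hpar, pdot_parallelogram] at hmin
    have hdd : (q - z.1) - (P y - z.1) = q - P y := by funext i; simp only [Pi.sub_apply]; ring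
    rw [hdd] at hmin
    have h0 : pdot (q - P y) (q - P y) ≤ 0 := by linarith
    have := pdot_nonneg (q - P y)
    have : q - P y = 0 := pdot_self_eq_zero (le_antisymm h0 this)
    exact sub_eq_zero.mp this
  -- separation property of the projection
  have hsepK : ∀ y ∈ B, ∀ x, (x, y) ∈ K →
      pdot (P y - z.1) (P y - z.1) ≤ pdot (P y - z.1) (x - z.1) := by
    intro y hy x hx
    have hD : 0 ≤ pdot (P y - z.1) (x - P y) := by
      apply obtuse_aux (pdot_nonneg (x - P y))
      intro t ht0 ht1
      have hpt : (P y + t • (x - P y), y) ∈ K := by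
        have : P y + t • (x - P y) = (1 - t) • P y + t • x := by
          funext i; simp [Pi.add_apply, Pi.smul_apply, Pi.sub_apply, smul_eq_mul]; ring
        rw [this]
        exact hconv y (hPK y hy) hx (by linarith) ht0.le (by ring)
      have hmin := hPmin y hy _ hpt
      have hpt2 : P y + t • (x - P y) - z.1 = (P y - z.1) + t • (x - P y) := by
        funext i; simp only [Pi.sub_apply, Pi.add_apply, Pi.smul_apply, smul_eq_mul]; ring
      rw [hpt2, pdot_expand] at hmin
      linarith
    have hx2 : x - z.1 = (x - P y) + (P y - z.1) := by funext i; simp only [Pi.sub_apply, Pi.add_apply]; ring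
    rw [hx2, pdot_add_right]
    linarith
  -- the normalized separating vector
  set v : (Fin m → ℝ) → (Fin n → ℝ) := fun y =>
    if y ∈ B then (pdot (P y - z.1) (P y - z.1))⁻¹ • (P y - z.1) else 0 with hvdef
  -- helper: bounded sequences of projections over B have subsequential limits in K
  have helper1 : ∀ (a : Fin m → ℝ) (c : ℕ → Fin m → ℝ) (M : ℝ), (∀ j, c j ∈ B) →
      Tendsto c atTop (𝓝 a) →
      (∀ j, pdot (P (c j) - z.1) (P (c j) - z.1) ≤ M) →
      ∃ q, (q, a) ∈ K ∧ ∃ ψ : ℕ → ℕ, StrictMono ψ ∧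
        Tendsto (fun j => P (c (ψ j))) atTop (𝓝 q) := by
    intro a c M hcB hc hM
    have hM0 : 0 ≤ M := le_trans (pdot_nonneg _) (hM 0)
    have hmem : ∀ j, P (c j) ∈ Metric.closedBall z.1 (Real.sqrt M) := by
      intro j
      rw [Metric.mem_closedBall]
      rw [dist_pi_le_iff (Real.sqrt_nonneg M)]
      intro i
      rw [Real.dist_eq]
      apply Real.abs_le_sqrt
      have h1 := sq_le_pdot (P (c j) - z.1) i
      simp only [Pi.sub_apply] at h1
      calc (P (c j) i - z.1 i) ^ 2 = (P (c j) i - z.1 i) * (P (c j) i - z.1 i) := sq _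
        _ ≤ pdot (P (c j) - z.1) (P (c j) - z.1) := h1
        _ ≤ M := hM j
    obtain ⟨q, hqmem, ψ, hψ, hqt⟩ :=
      (isCompact_closedBall z.1 (Real.sqrt M)).tendsto_subseq hmem
    refine ⟨q, ?_, ψ, hψ, hqt⟩
    have hpair : Tendsto (fun j => (P (c (ψ j)), c (ψ j))) atTop (𝓝 (q, a)) :=
      Tendsto.prodMk_nhds hqt (hc.comp hψ.tendsto_atTop)
    exact hKcl.mem_of_tendsto hpair (Filter.Eventually.of_forall fun j => hPK _ (hcB _))
  -- continuity of v on A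
  have key : ∀ y ∈ A, ∀ u : ℕ → Fin m → ℝ, (∀ k, u k ∈ A) →
      Tendsto u atTop (𝓝 y) → Tendsto (v ∘ u) atTop (𝓝 (v y)) := by
    intro y hyA u huA hu
    by_cases hyB : y ∈ B
    · -- eventually u k ∈ B
      have hev : ∀ᶠ k in atTop, u k ∈ B := by
        by_contra hcon
        obtain ⟨φ1, hφ1, hbad⟩ :=
          Filter.extraction_of_frequently_atTop (Filter.not_eventually.mp hcon)
        have hnotY : ∀ j, u (φ1 j) ∉ Y :=
          fun j hYj => hbad j ⟨hYj, hAdist _ (huA _)⟩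
        have hbex : ∀ j : ℕ, ∃ b ∈ B, dist b (u (φ1 j)) < 1 / (j + 1) ∧
            (j : ℝ) < pdot (P b - z.1) (P b - z.1) := by
          intro j
          by_contra hcon2
          push_neg at hcon2
          have hc : ∀ l : ℕ, ∃ b ∈ B,
              dist (u (φ1 j)) b < min (1 / ((j : ℝ) + 1)) (1 / ((l : ℝ) + 1)) := by
            intro l
            exact Metric.mem_closure_iff.mp (huA (φ1 j)) _
              (lt_min (by positivity) (by positivity))
          choose c hcB hcd using hc
          have hctend : Tendsto c atTop (𝓝 (u (φ1 j))) := by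
            apply Filter.Tendsto.congr_dist (f₁ := fun _ => u (φ1 j)) tendsto_const_nhds
            apply tendsto_of_tendsto_of_tendsto_of_le_of_le tendsto_const_nhds
              tendsto_one_div_add_atTop_nhds_zero_nat (fun l => dist_nonneg)
              (fun l => le_trans (hcd l).le (min_le_right _ _))
          have hbound : ∀ l, pdot (P (c l) - z.1) (P (c l) - z.1) ≤ (j : ℝ) := by
            intro l
            apply hcon2 (c l) (hcB l)
            rw [dist_comm]
            exact lt_of_lt_of_le (hcd l) (min_le_left _ _)
          obtain ⟨q, hqK, _⟩ := helper1 (u (φ1 j)) c j hcB hctend hbound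
          exact hnotY j (hY ▸ ⟨(q, u (φ1 j)), hqK, rfl⟩)
        choose b hbB hbd hbQ using hbex
        have hbtend : Tendsto b atTop (𝓝 y) := by
          apply Filter.Tendsto.congr_dist (f₁ := fun j => u (φ1 j))
            (hu.comp hφ1.tendsto_atTop)
          apply tendsto_of_tendsto_of_tendsto_of_le_of_le tendsto_const_nhds
            tendsto_one_div_add_atTop_nhds_zero_nat (fun j => dist_nonneg)
            (fun j => by rw [dist_comm]; exact (hbd j).le)
        obtain ⟨ψ, hψ, x, hxK, hxt⟩ := huhc y hyB.1 b (fun j => (hbB j).1) hbtend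
          (fun j => P (b j)) (fun j => hPK _ (hbB j))
        have hQt : Tendsto (fun j => pdot (P (b (ψ j)) - z.1) (P (b (ψ j)) - z.1))
            atTop (𝓝 (pdot (x - z.1) (x - z.1))) := (hQc.tendsto x).comp hxt
        have hub : ∀ᶠ j in atTop,
            pdot (P (b (ψ j)) - z.1) (P (b (ψ j)) - z.1) ≤ pdot (x - z.1) (x - z.1) + 1 :=
          hQt.eventually_le_const (lt_add_one _)
        obtain ⟨j, hj1, hj2⟩ :=
          ((hub).and (Filter.eventually_ge_atTop (⌈pdot (x - z.1) (x - z.1) + 1⌉₊ + 1))).exists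
        have h1 : (j : ℝ) < pdot (P (b (ψ j)) - z.1) (P (b (ψ j)) - z.1) := by
          have := hbQ (ψ j)
          have hle : (j : ℝ) ≤ (ψ j : ℝ) := Nat.cast_le.mpr (hψ.le_apply)
          linarith
        have h2 : pdot (x - z.1) (x - z.1) + 1 ≤ (j : ℝ) := by
          have hceil : pdot (x - z.1) (x - z.1) + 1 ≤ (⌈pdot (x - z.1) (x - z.1) + 1⌉₊ : ℝ) :=
            Nat.le_ceil _
          have : ((⌈pdot (x - z.1) (x - z.1) + 1⌉₊ + 1 : ℕ) : ℝ) ≤ (j : ℝ) :=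
            Nat.cast_le.mpr hj2
          push_cast at this
          linarith
        linarith [hj1]
      -- WLOG all in B
      set u2 : ℕ → Fin m → ℝ := fun k => if u k ∈ B then u k else y with hu2def
      have hu2B : ∀ k, u2 k ∈ B := by
        intro k
        by_cases h : u k ∈ B <;> simp [hu2def, h, hyB]
      have h12 : u2 =ᶠ[atTop] u := hev.mono fun k hk => by simp [hu2def, hk]
      have hu2 : Tendsto u2 atTop (𝓝 y) := hu.congr' h12.symm
      have hvv : (v ∘ u2) =ᶠ[atTop] (v ∘ u) := h12.mono fun k hk => by
        simp only [Function.comp_apply, hk]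
      rw [← tendsto_congr' hvv]
      -- it remains: Tendsto (v ∘ u2) atTop (𝓝 (v y)) ... main step: P ∘ u2 → P y
      have hPt : Tendsto (fun k => P (u2 k)) atTop (𝓝 (P y)) := by
        obtain ⟨xk, hxkK, hxkt⟩ := hlhc y hyB.1 u2 (fun k => (hu2B k).1) hu2 (P y) (hPK y hyB)
        have hxQ : Tendsto (fun k => pdot (xk k - z.1) (xk k - z.1)) atTop
            (𝓝 (pdot (P y - z.1) (P y - z.1))) := (hQc.tendsto _).comp hxkt
        obtain ⟨M, hM⟩ := hxQ.bddAbove_range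
        have hMk : ∀ k, pdot (xk k - z.1) (xk k - z.1) ≤ M := fun k => hM ⟨k, rfl⟩
        have hPb : ∀ k, pdot (P (u2 k) - z.1) (P (u2 k) - z.1) ≤ M :=
          fun k => le_trans (hPmin _ (hu2B k) _ (hxkK k)) (hMk k)
        apply tendsto_of_subseq_tendsto
        intro ns hns
        obtain ⟨q, hqK, ψ, hψ, hqt⟩ := helper1 y (fun j => u2 (ns j)) M
          (fun j => hu2B _) (hu2.comp hns) (fun j => hPb _)
        refine ⟨ψ, ?_⟩
        have hq1 : pdot (q - z.1) (q - z.1) ≤ pdot (P y - z.1) (P y - z.1) := by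
          apply le_of_tendsto_of_tendsto' ((hQc.tendsto q).comp hqt)
            ((hxQ.comp hns).comp hψ.tendsto_atTop)
          intro j
          exact hPmin _ (hu2B (ns (ψ j))) _ (hxkK (ns (ψ j)))
        have hqPy : q = P y := hPuniq y hyB q hqK hq1
        rw [hqPy] at hqt
        exact hqt
      have hQPt : Tendsto (fun k => pdot (P (u2 k) - z.1) (P (u2 k) - z.1)) atTop
          (𝓝 (pdot (P y - z.1) (P y - z.1))) := (hQc.tendsto _).comp hPt
      have hne : pdot (P y - z.1) (P y - z.1) ≠ 0 := ne_of_gt (hQPpos y hyB)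
      have hfin : Tendsto (fun k => (pdot (P (u2 k) - z.1) (P (u2 k) - z.1))⁻¹ •
          (P (u2 k) - z.1)) atTop
          (𝓝 ((pdot (P y - z.1) (P y - z.1))⁻¹ • (P y - z.1))) :=
        Tendsto.smul (hQPt.inv₀ hne) (hPt.sub tendsto_const_nhds)
      have hveq : ∀ k, (v ∘ u2) k = (pdot (P (u2 k) - z.1) (P (u2 k) - z.1))⁻¹ •
          (P (u2 k) - z.1) := by
        intro k
        simp only [Function.comp_apply, hvdef]
        rw [if_pos (hu2B k)]
      have hvy : v y = (pdot (P y - z.1) (P y - z.1))⁻¹ • (P y - z.1) := by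
        simp only [hvdef]
        rw [if_pos hyB]
      rw [hvy]
      exact hfin.congr (fun k => (hveq k).symm)
    · -- y ∉ B : v y = 0
      have hvy : v y = 0 := by simp only [hvdef]; rw [if_neg hyB]
      rw [hvy]
      rw [Metric.tendsto_atTop]
      intro η hη
      by_contra hcon
      push_neg at hcon
      have hfreq : ∃ᶠ k in atTop, η ≤ dist ((v ∘ u) k) 0 := by
        rw [Filter.frequently_atTop]
        intro N
        obtain ⟨k, hk1, hk2⟩ := hcon N
        exact ⟨k, hk1, hk2⟩
      obtain ⟨φ1, hφ1, hbad⟩ := Filter.extraction_of_frequently_atTop hfreq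
      have huB : ∀ j, u (φ1 j) ∈ B := by
        intro j
        by_contra h
        have : v (u (φ1 j)) = 0 := by simp only [hvdef]; rw [if_neg h]
        have hb := hbad j
        simp only [Function.comp_apply, this, dist_self] at hb
        linarith
      have hQb : ∀ j, pdot (P (u (φ1 j)) - z.1) (P (u (φ1 j)) - z.1) ≤ 4 / η ^ 2 := by
        intro j
        set a : Fin n → ℝ := P (u (φ1 j)) - z.1 with hadef
        set Q' : ℝ := pdot a a with hQ'def
        have hQ'pos : 0 < Q' := hQPpos _ (huB j)
        have hvj : v (u (φ1 j)) = Q'⁻¹ • a := by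
          simp only [hvdef]; rw [if_pos (huB j)]
        have hd : η ≤ dist (Q'⁻¹ • a) 0 := by
          have := hbad j
          simp only [Function.comp_apply, hvj] at this
          exact this
        have hnot : ¬ dist (Q'⁻¹ • a) 0 ≤ η / 2 := by intro h; linarith
        have hex : ∃ i, ¬ dist ((Q'⁻¹ • a) i) ((0 : Fin n → ℝ) i) ≤ η / 2 := by
          by_contra hall
          push_neg at hall
          exact hnot ((dist_pi_le_iff (by linarith)).mpr fun i => hall i)
        obtain ⟨i, hi⟩ := hex
        push_neg at hi
        rw [Real.dist_eq] at hi
        simp only [Pi.smul_apply, Pi.zero_apply, smul_eq_mul, sub_zero] at hi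
        have habs : η / 2 < Q'⁻¹ * |a i| := by
          rwa [abs_mul, abs_inv, abs_of_pos hQ'pos] at hi
        have h2 : η / 2 * Q' < |a i| := by
          have := mul_lt_mul_of_pos_right habs hQ'pos
          rwa [inv_mul_eq_div, div_mul_cancel₀ _ (ne_of_gt hQ'pos)] at this
        have h3 : a i * a i ≤ Q' := sq_le_pdot a i
        have h4 : (η / 2 * Q') * (η / 2 * Q') < a i * a i := by
          have h5 : (η / 2 * Q') * (η / 2 * Q') < |a i| * |a i| :=
            mul_self_lt_mul_self (by positivity) h2
          rwa [abs_mul_abs_self] at h5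
        rw [le_div_iff₀ (by positivity : (0:ℝ) < η ^ 2)]
        nlinarith [h4, h3, hQ'pos]
      obtain ⟨q, hqK, _⟩ := helper1 y (fun j => u (φ1 j)) (4 / η ^ 2) huB
        (hu.comp hφ1.tendsto_atTop) hQb
      have hyY : y ∈ Y := hY ▸ ⟨(q, y), hqK, rfl⟩
      exact hyB ⟨hyY, hAdist y hyA⟩
  have hvA : ContinuousOn v A := by
    intro y hy
    apply Filter.tendsto_iff_seq_tendsto.mpr
    intro u hu
    rw [tendsto_nhdsWithin_iff] at hu
    set u' : ℕ → Fin m → ℝ := fun k => if u k ∈ A then u k else y with hu'def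
    have hu'A : ∀ k, u' k ∈ A := by
      intro k
      by_cases h : u k ∈ A <;> simp [hu'def, h, hy]
    have huu' : u' =ᶠ[atTop] u := hu.2.mono fun k hk => by simp [hu'def, hk]
    have hu'tend : Tendsto u' atTop (𝓝 y) := hu.1.congr' huu'.symm
    have hk := key y hy u' hu'A hu'tend
    exact hk.congr' (huu'.mono fun k hk => by simp only [Function.comp_apply, hk])
  -- Tietze extension
  obtain ⟨g, hg⟩ := ContinuousMap.exists_restrict_eq (Y := Fin n → ℝ) hAcl
    ⟨A.restrict v, continuousOn_iff_continuous_restrict.mp hvA⟩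
  have hgA : ∀ a ∈ A, g a = v a := by
    intro a ha
    have := DFunLike.congr_fun hg (⟨a, ha⟩ : A)
    exact this
  -- bump function
  set φb : (Fin m → ℝ) → ℝ := fun y => max 0 (1 - dist y z.2 / (ε / 2)) with hφbdef
  have hφbc : Continuous φb :=
    continuous_const.max (continuous_const.sub
      ((Continuous.dist continuous_id continuous_const).div_const _))
  have hφb0 : ∀ y', 0 ≤ φb y' := fun y' => le_max_left _ _
  have hφbz : φb z.2 = 1 := by simp [hφbdef]
  have hφbpos : ∀ y', 0 < φb y' → dist y' z.2 < ε / 2 := by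
    intro y' hpos
    rcases le_or_gt (1 - dist y' z.2 / (ε / 2)) 0 with h | h
    · rw [hφbdef] at hpos
      simp only at hpos
      rw [max_eq_left h] at hpos
      linarith
    · have : dist y' z.2 / (ε / 2) < 1 := by linarith
      calc dist y' z.2 = dist y' z.2 / (ε / 2) * (ε / 2) := by field_simp
        _ < 1 * (ε / 2) := by
            apply mul_lt_mul_of_pos_right this (by linarith)
        _ = ε / 2 := one_mul _
  -- the separating function
  refine ⟨fun q => φb q.2 * (pdot (g q.2) (q.1 - z.1) - 1/2), ?_, ?_, ?_, ?_⟩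
  · apply Continuous.mul (hφbc.comp continuous_snd)
    apply Continuous.sub _ continuous_const
    exact pdot_continuous.comp ((g.continuous.comp continuous_snd).prodMk
      (continuous_fst.sub continuous_const))
  · intro y x₁ x₂ t ht
    simp only
    rw [pdot_affine]
    ring
  · rintro ⟨x, y⟩ hw
    simp only
    rcases eq_or_lt_of_le (hφb0 y) with h0 | hpos
    · rw [← h0]; simp
    · have hd := hφbpos y hpos
      have hyY : y ∈ Y := hY ▸ ⟨(x, y), hw, rfl⟩
      have hyB : y ∈ B := ⟨hyY, hd.le⟩
      have hgv : g y = v y := hgA y (subset_closure hyB)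
      have hkey : 1 ≤ pdot (v y) (x - z.1) := by
        have hvB : v y = (pdot (P y - z.1) (P y - z.1))⁻¹ • (P y - z.1) := by
          simp only [hvdef]; rw [if_pos hyB]
        rw [hvB, pdot_smul_left]
        have hs := hsepK y hyB x hw
        have hpos' := hQPpos y hyB
        calc (1 : ℝ) = (pdot (P y - z.1) (P y - z.1))⁻¹ * pdot (P y - z.1) (P y - z.1) :=
              (inv_mul_cancel₀ (ne_of_gt hpos')).symm
          _ ≤ (pdot (P y - z.1) (P y - z.1))⁻¹ * pdot (P y - z.1) (x - z.1) := by
              apply mul_le_mul_of_nonneg_left hs (inv_nonneg.mpr hpos'.le)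
      apply mul_nonneg (hφb0 y)
      rw [hgv]
      linarith
  · simp only [sub_self]
    have hp0 : pdot (g z.2) (0 : Fin n → ℝ) = 0 := by simp [pdot]
    rw [hφbz, hp0]
    norm_num
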